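/- Let Ω := {(x,y) ∈ ℝ² : x > 1, 0 < y < 1/x}. Then Ω has infinite Lebesgue measure, and for every φ > 1 the φ-shell Minkowski dimension of Ω at infinity exists and equals -2, with φ-shell Minkowski content M_φ^{-2}(∞,Ω) = log φ. -/

import Mathlib

open MeasureTheory Filter Set
open scoped ENNReal NNReal Topology

noncomputable section

/-- The `[a,b)`-shell centered at the origin in `ℝ^N`. -/
def shell (N : ℕ) (a b : ℝ) : Set (EuclideanSpace ℝ (Fin N)) :=
  {x | a ≤ ‖x‖ ∧ ‖x‖ < b}

/-- The complement of the open ball `B_t(0)` in `ℝ^N`. -/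
def farBall (N : ℕ) (t : ℝ) : Set (EuclideanSpace ℝ (Fin N)) :=
  {x | t ≤ ‖x‖}

/-- Upper φ-shell Minkowski content of `Ω` at infinity. -/
def upperShellContent (N : ℕ) (Ω : Set (EuclideanSpace ℝ (Fin N))) (φ r : ℝ) : ℝ≥0∞ :=
  Filter.limsup (fun t : ℝ =>
    volume (shell N t (φ * t) ∩ Ω) / ENNReal.ofReal (t ^ ((N : ℝ) + r))) Filter.atTop

/-- Lower φ-shell Minkowski content of `Ω` at infinity. -/
def lowerShellContent (N : ℕ) (Ω : Set (EuclideanSpace ℝ (Fin N))) (φ r : ℝ) : ℝ≥0∞ :=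
  Filter.liminf (fun t : ℝ =>
    volume (shell N t (φ * t) ∩ Ω) / ENNReal.ofReal (t ^ ((N : ℝ) + r))) Filter.atTop

/-- Upper Minkowski content of `Ω` at infinity. -/
def upperContent (N : ℕ) (Ω : Set (EuclideanSpace ℝ (Fin N))) (r : ℝ) : ℝ≥0∞ :=
  Filter.limsup (fun t : ℝ =>
    volume (farBall N t ∩ Ω) / ENNReal.ofReal (t ^ ((N : ℝ) + r))) Filter.atTop

/-- Lower Minkowski content of `Ω` at infinity. -/
def lowerContent (N : ℕ) (Ω : Set (EuclideanSpace ℝ (Fin N))) (r : ℝ) : ℝ≥0∞ :=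
  Filter.liminf (fun t : ℝ =>
    volume (farBall N t ∩ Ω) / ENNReal.ofReal (t ^ ((N : ℝ) + r))) Filter.atTop

/-- Upper φ-shell Minkowski dimension of `Ω` at infinity, as an extended real. -/
def upperShellDim (N : ℕ) (Ω : Set (EuclideanSpace ℝ (Fin N))) (φ : ℝ) : EReal :=
  sInf ((fun r : ℝ => (r : EReal)) '' {r : ℝ | upperShellContent N Ω φ r = 0})

/-- Lower φ-shell Minkowski dimension of `Ω` at infinity, as an extended real. -/
def lowerShellDim (N : ℕ) (Ω : Set (EuclideanSpace ℝ (Fin N))) (φ : ℝ) : EReal :=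
  sInf ((fun r : ℝ => (r : EReal)) '' {r : ℝ | lowerShellContent N Ω φ r = 0})


lemma norm_E2 (x : EuclideanSpace ℝ (Fin 2)) : ‖x‖ = Real.sqrt (x 0 ^ 2 + x 1 ^ 2) := by
  rw [EuclideanSpace.norm_eq]
  simp [Fin.sum_univ_two, Real.norm_eq_abs, sq_abs]

lemma strip_volume (a b : ℝ) (ha : 1 ≤ a) (hab : a ≤ b) :
    volume {x : EuclideanSpace ℝ (Fin 2) | a ≤ x 0 ∧ x 0 < b ∧ 0 < x 1 ∧ x 1 < (x 0)⁻¹}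
      = ENNReal.ofReal (Real.log b - Real.log a) := by
  have ha0 : (0:ℝ) < a := lt_of_lt_of_le one_pos ha
  have hMP : MeasurePreserving
      (fun x : EuclideanSpace ℝ (Fin 2) => ((MeasurableEquiv.finTwoArrow)
        ((MeasurableEquiv.toLp 2 (Fin 2 → ℝ)).symm x)) : EuclideanSpace ℝ (Fin 2) → ℝ × ℝ)
      volume volume :=
    (volume_preserving_finTwoArrow ℝ).comp (EuclideanSpace.volume_preserving_symm_measurableEquiv_toLp (Fin 2))
  have hset : {x : EuclideanSpace ℝ (Fin 2) | a ≤ x 0 ∧ x 0 < b ∧ 0 < x 1 ∧ x 1 < (x 0)⁻¹}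
      = (fun x : EuclideanSpace ℝ (Fin 2) => ((MeasurableEquiv.finTwoArrow)
        ((MeasurableEquiv.toLp 2 (Fin 2 → ℝ)).symm x))) ⁻¹'
        (regionBetween (fun _ => (0:ℝ)) (fun x : ℝ => x⁻¹) (Ico a b)) := by
    ext x
    simp [regionBetween, Ico, and_assoc, MeasurableEquiv.finTwoArrow, MeasurableEquiv.toLp]
    exact Iff.rfl
  have hmeas : MeasurableSet (regionBetween (fun _ => (0:ℝ)) (fun x : ℝ => x⁻¹) (Ico a b)) :=
    measurableSet_regionBetween measurable_const (measurable_inv) measurableSet_Ico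
  rw [hset, hMP.measure_preimage hmeas.nullMeasurableSet]
  have hint : IntegrableOn (fun x : ℝ => x⁻¹) (Ico a b) volume := by
    apply (ContinuousOn.integrableOn_compact isCompact_Icc (f := fun x : ℝ => x⁻¹) ?_).mono_set
      Ico_subset_Icc_self
    exact continuousOn_inv₀.mono fun x hx => ne_of_gt (lt_of_lt_of_le ha0 hx.1)
  have := volume_regionBetween_eq_integral (f := fun _ => (0:ℝ)) (g := fun x : ℝ => x⁻¹)
    (μ := volume) (integrableOn_const (measure_Ico_lt_top.ne)) hint measurableSet_Ico
    (fun y hy => by simpa using inv_nonneg.2 (le_of_lt (lt_of_lt_of_le ha0 hy.1)))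
  rw [Measure.volume_eq_prod, this]
  congr 1
  simp only [Pi.sub_apply, sub_zero]
  rw [setIntegral_congr_set Ico_ae_eq_Ioc, ← intervalIntegral.integral_of_le hab,
    integral_inv_of_pos ha0 (lt_of_lt_of_le ha0 hab), Real.log_div (ne_of_gt (lt_of_lt_of_le ha0 hab)) (ne_of_gt ha0)]

set_option maxHeartbeats 1000000 in
lemma main_tendsto (φ : ℝ) (hφ : 1 < φ) :
    Tendsto (fun t : ℝ => volume (shell 2 t (φ * t) ∩
        {x : EuclideanSpace ℝ (Fin 2) | 1 < x 0 ∧ 0 < x 1 ∧ x 1 < (x 0)⁻¹}))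
      atTop (𝓝 (ENNReal.ofReal (Real.log φ))) := by
  have hφ0 : (0:ℝ) < φ := by linarith
  -- eventual conditions
  have hev : ∀ᶠ t : ℝ in atTop, 2 ≤ t ∧ 1 ≤ (φ - 1) * t ^ 2 := by
    have h2 : Tendsto (fun t : ℝ => (φ - 1) * t ^ 2) atTop atTop :=
      (tendsto_pow_atTop two_ne_zero).const_mul_atTop (by linarith)
    exact (eventually_ge_atTop 2).and (h2.eventually_ge_atTop 1)
  -- squeeze
  apply tendsto_of_tendsto_of_tendsto_of_le_of_le'
    (g := fun t : ℝ => ENNReal.ofReal (Real.log (φ * t - t⁻¹) - Real.log t))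
    (h := fun t : ℝ => ENNReal.ofReal (Real.log (φ * t) - Real.log (t - t⁻¹)))
  · -- lower bound tendsto
    have hreal : Tendsto (fun t : ℝ => Real.log (φ * t - t⁻¹) - Real.log t) atTop
        (𝓝 (Real.log φ)) := by
      have heq : (fun t : ℝ => Real.log (φ - (t ^ 2)⁻¹)) =ᶠ[atTop]
          (fun t : ℝ => Real.log (φ * t - t⁻¹) - Real.log t) := by
        filter_upwards [hev] with t ⟨ht2, htφ⟩
        have ht0 : (0:ℝ) < t := by linarith
        have harg : (0:ℝ) < φ - (t ^ 2)⁻¹ := by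
          rw [sub_pos, inv_lt_iff_one_lt_mul₀ (by positivity)]
          nlinarith
        have : φ * t - t⁻¹ = t * (φ - (t ^ 2)⁻¹) := by field_simp
        rw [this, Real.log_mul (ne_of_gt ht0) (ne_of_gt harg)]; ring
      have : Tendsto (fun t : ℝ => Real.log (φ - (t ^ 2)⁻¹)) atTop (𝓝 (Real.log φ)) := by
        have h0 : Tendsto (fun t : ℝ => φ - (t ^ 2)⁻¹) atTop (𝓝 φ) := by
          have h1 : Tendsto (fun t : ℝ => (t ^ 2)⁻¹) atTop (𝓝 0) :=
            tendsto_inv_atTop_zero.comp (tendsto_pow_atTop two_ne_zero)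
          simpa using h1.const_sub φ
        exact ((Real.continuousAt_log (ne_of_gt hφ0)).tendsto).comp h0
      exact this.congr' heq
    exact (ENNReal.continuous_ofReal.tendsto _).comp hreal
  · -- upper bound tendsto
    have hreal : Tendsto (fun t : ℝ => Real.log (φ * t) - Real.log (t - t⁻¹)) atTop
        (𝓝 (Real.log φ)) := by
      have heq : (fun t : ℝ => Real.log φ - Real.log (1 - (t ^ 2)⁻¹)) =ᶠ[atTop]
          (fun t : ℝ => Real.log (φ * t) - Real.log (t - t⁻¹)) := by
        filter_upwards [hev] with t ⟨ht2, htφ⟩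
        have ht0 : (0:ℝ) < t := by linarith
        have harg : (0:ℝ) < 1 - (t ^ 2)⁻¹ := by
          rw [sub_pos, inv_lt_iff_one_lt_mul₀ (by positivity)]
          nlinarith
        have h1 : t - t⁻¹ = t * (1 - (t ^ 2)⁻¹) := by field_simp
        rw [h1, Real.log_mul (ne_of_gt ht0) (ne_of_gt harg),
          Real.log_mul (ne_of_gt hφ0) (ne_of_gt ht0)]
        ring
      have : Tendsto (fun t : ℝ => Real.log φ - Real.log (1 - (t ^ 2)⁻¹)) atTop
          (𝓝 (Real.log φ)) := by
        have h0 : Tendsto (fun t : ℝ => 1 - (t ^ 2)⁻¹) atTop (𝓝 1) := by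
          have h1 : Tendsto (fun t : ℝ => (t ^ 2)⁻¹) atTop (𝓝 0) :=
            tendsto_inv_atTop_zero.comp (tendsto_pow_atTop two_ne_zero)
          simpa using h1.const_sub 1
        have h2 := ((Real.continuousAt_log one_ne_zero).tendsto).comp h0
        have h3 : Tendsto (fun t : ℝ => Real.log (1 - (t ^ 2)⁻¹)) atTop (𝓝 0) := by
          simpa [Function.comp_def] using h2
        simpa using h3.const_sub (Real.log φ)
      exact this.congr' heq
    exact (ENNReal.continuous_ofReal.tendsto _).comp hreal
  · -- lower bound ineq
    filter_upwards [hev] with t ⟨ht2, htφ⟩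
    have ht0 : (0:ℝ) < t := by linarith
    have hab : t ≤ φ * t - t⁻¹ := by
      rw [le_sub_iff_add_le, ← sub_nonneg]
      have : φ * t - (t + t⁻¹) = ((φ - 1) * t ^ 2 - 1) / t := by field_simp; ring
      rw [this]
      exact div_nonneg (by linarith) ht0.le
    rw [← strip_volume t (φ * t - t⁻¹) (by linarith) hab]
    apply measure_mono
    rintro x ⟨hx1, hx2, hx3, hx4⟩
    have hx0 : (0:ℝ) < x 0 := by linarith
    have hx1t : x 1 < t⁻¹ := lt_of_lt_of_le hx4 (inv_anti₀ ht0 hx1)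
    have htu : t * t⁻¹ = 1 := mul_inv_cancel₀ (ne_of_gt ht0)
    have hu0 : (0:ℝ) < t⁻¹ := inv_pos.2 ht0
    have hu2 : t⁻¹ ≤ 2⁻¹ := inv_anti₀ (by norm_num) ht2
    simp only [Set.mem_inter_iff, shell, Set.mem_setOf_eq, norm_E2]
    refine ⟨⟨?_, ?_⟩, by linarith, hx3, hx4⟩
    · nlinarith [Real.sq_sqrt (show (0:ℝ) ≤ x 0 ^ 2 + x 1 ^ 2 by positivity),
        Real.sqrt_nonneg (x 0 ^ 2 + x 1 ^ 2)]
    · rw [show φ * t = Real.sqrt ((φ * t) ^ 2) from (Real.sqrt_sq (by positivity)).symm]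
      apply Real.sqrt_lt_sqrt (by positivity)
      nlinarith [sq_nonneg (x 1), sq_nonneg (x 0)]
  · -- upper bound ineq
    filter_upwards [hev] with t ⟨ht2, htφ⟩
    have ht0 : (0:ℝ) < t := by linarith
    have htu : t * t⁻¹ = 1 := mul_inv_cancel₀ (ne_of_gt ht0)
    have hu0 : (0:ℝ) < t⁻¹ := inv_pos.2 ht0
    have hu2 : t⁻¹ ≤ 2⁻¹ := inv_anti₀ (by norm_num) ht2
    have ha1 : (1:ℝ) ≤ t - t⁻¹ := by linarith
    have hab : t - t⁻¹ ≤ φ * t := by nlinarith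
    rw [← strip_volume (t - t⁻¹) (φ * t) ha1 hab]
    apply measure_mono
    rintro x ⟨⟨hs1, hs2⟩, hx1, hx3, hx4⟩
    have hx0 : (0:ℝ) < x 0 := by linarith
    have hnx : ‖x‖ ^ 2 = x 0 ^ 2 + x 1 ^ 2 := by
      rw [norm_E2, Real.sq_sqrt (by positivity)]
    have h1 : t ^ 2 ≤ x 0 ^ 2 + x 1 ^ 2 := by
      rw [← hnx]; nlinarith [norm_nonneg x]
    have hx1lt1 : x 1 < 1 := by
      calc x 1 < (x 0)⁻¹ := hx4
      _ < 1 := by rw [inv_lt_one_iff₀]; right; exact hx1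
    have hxge : t - t⁻¹ ≤ x 0 := by
      nlinarith [sq_nonneg (x 1)]
    have hxlt : x 0 < φ * t := by
      have : x 0 ≤ ‖x‖ := by
        rw [norm_E2]
        nlinarith [Real.sq_sqrt (show (0:ℝ) ≤ x 0 ^ 2 + x 1 ^ 2 by positivity),
          Real.sqrt_nonneg (x 0 ^ 2 + x 1 ^ 2)]
      linarith
    simp only [Set.mem_setOf_eq]
    exact ⟨hxge, hxlt, hx3, hx4⟩


lemma sInf_image_Ioi_EReal (a : ℝ) :
    sInf ((fun r : ℝ => (r : EReal)) '' Ioi a) = (a : EReal) := by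
  apply le_antisymm
  · apply le_of_forall_gt_imp_ge_of_dense
    intro b hb
    obtain ⟨x, hax, hxb⟩ := EReal.lt_iff_exists_real_btwn.1 hb
    exact le_trans (sInf_le ⟨x, by exact_mod_cast hax, rfl⟩) hxb.le
  · exact le_sInf (by rintro b ⟨r, hr, rfl⟩; exact EReal.coe_le_coe_iff.2 hr.le)

lemma quotient_tendsto (φ r : ℝ) (hφ : 1 < φ) :
    ∃ L : ℝ≥0∞, Tendsto (fun t : ℝ => volume (shell 2 t (φ * t) ∩
        {x : EuclideanSpace ℝ (Fin 2) | 1 < x 0 ∧ 0 < x 1 ∧ x 1 < (x 0)⁻¹}) /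
        ENNReal.ofReal (t ^ ((2:ℝ) + r))) atTop (𝓝 L) ∧ (L = 0 ↔ -2 < r) := by
  set c := ENNReal.ofReal (Real.log φ) with hc
  have hc0 : c ≠ 0 := by
    simp only [hc, ne_eq, ENNReal.ofReal_eq_zero, not_le]
    exact Real.log_pos hφ
  have hcT : c ≠ ⊤ := ENNReal.ofReal_ne_top
  have hμ := main_tendsto φ hφ
  rcases lt_trichotomy ((2:ℝ) + r) 0 with hs | hs | hs
  · -- denominator → 0, quotient → ⊤
    refine ⟨⊤, ?_, by constructor <;> intro h <;> [exact absurd h ENNReal.top_ne_zero; linarith]⟩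
    have hb : Tendsto (fun t : ℝ => ENNReal.ofReal (t ^ ((2:ℝ) + r))) atTop (𝓝 0) := by
      have : Tendsto (fun t : ℝ => t ^ ((2:ℝ) + r)) atTop (𝓝 0) := by
        have := tendsto_rpow_neg_atTop (y := -((2:ℝ) + r)) (by linarith)
        simpa using this
      simpa [Function.comp_def] using (ENNReal.continuous_ofReal.tendsto 0).comp this
    have := ENNReal.Tendsto.div hμ (Or.inl hc0) hb (Or.inl (by simp))
    simpa [ENNReal.div_zero (show ENNReal.ofReal (Real.log φ) ≠ 0 from hc0)] using this
  · -- denominator = 1 eventually (always), quotient → c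
    refine ⟨c, ?_, by constructor <;> intro h <;> [exact absurd h hc0; linarith]⟩
    have heq : (fun t : ℝ => volume (shell 2 t (φ * t) ∩
        {x : EuclideanSpace ℝ (Fin 2) | 1 < x 0 ∧ 0 < x 1 ∧ x 1 < (x 0)⁻¹}) /
        ENNReal.ofReal (t ^ ((2:ℝ) + r))) = (fun t : ℝ => volume (shell 2 t (φ * t) ∩
        {x : EuclideanSpace ℝ (Fin 2) | 1 < x 0 ∧ 0 < x 1 ∧ x 1 < (x 0)⁻¹})) := by
      funext t
      rw [hs, Real.rpow_zero, ENNReal.ofReal_one, div_one]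
    rw [heq]; exact hμ
  · -- denominator → ⊤, quotient → 0
    refine ⟨0, ?_, by simp; linarith⟩
    have hb : Tendsto (fun t : ℝ => ENNReal.ofReal (t ^ ((2:ℝ) + r))) atTop (𝓝 ⊤) :=
      ENNReal.tendsto_ofReal_atTop.comp (tendsto_rpow_atTop hs)
    have := ENNReal.Tendsto.div hμ (Or.inl hc0) hb (Or.inr hcT)
    simpa [ENNReal.div_top] using this

lemma content_zero_iff (φ r : ℝ) (hφ : 1 < φ) :
    (upperShellContent 2 {x : EuclideanSpace ℝ (Fin 2) | 1 < x 0 ∧ 0 < x 1 ∧ x 1 < (x 0)⁻¹} φ r = 0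
      ↔ -2 < r) ∧
    (lowerShellContent 2 {x : EuclideanSpace ℝ (Fin 2) | 1 < x 0 ∧ 0 < x 1 ∧ x 1 < (x 0)⁻¹} φ r = 0
      ↔ -2 < r) := by
  obtain ⟨L, hL, hL0⟩ := quotient_tendsto φ r hφ
  have h2 : ((2:ℕ):ℝ) + r = (2:ℝ) + r := by norm_num
  constructor
  · rw [upperShellContent, h2, hL.limsup_eq]; exact hL0
  · rw [lowerShellContent, h2, hL.liminf_eq]; exact hL0

theorem hyperbola_domain_shell_dim (φ : ℝ) (hφ : 1 < φ) :
    volume {x : EuclideanSpace ℝ (Fin 2) | 1 < x 0 ∧ 0 < x 1 ∧ x 1 < (x 0)⁻¹} = ⊤ ∧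
    upperShellDim 2 {x : EuclideanSpace ℝ (Fin 2) | 1 < x 0 ∧ 0 < x 1 ∧ x 1 < (x 0)⁻¹} φ
      = ((-2 : ℝ) : EReal) ∧
    lowerShellDim 2 {x : EuclideanSpace ℝ (Fin 2) | 1 < x 0 ∧ 0 < x 1 ∧ x 1 < (x 0)⁻¹} φ
      = ((-2 : ℝ) : EReal) ∧
    Filter.Tendsto (fun t : ℝ =>
        volume (shell 2 t (φ * t) ∩
            {x : EuclideanSpace ℝ (Fin 2) | 1 < x 0 ∧ 0 < x 1 ∧ x 1 < (x 0)⁻¹}) /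
          ENNReal.ofReal (t ^ ((2 : ℝ) + (-2 : ℝ)))) Filter.atTop
      (nhds (ENNReal.ofReal (Real.log φ))) := by
  refine ⟨?_, ?_, ?_, ?_⟩
  · -- infinite volume
    apply ENNReal.eq_top_of_forall_nnreal_le
    intro n
    have h1 : (2:ℝ) ≤ 2 * Real.exp n := by
      nlinarith [Real.one_le_exp (show (0:ℝ) ≤ n from n.2)]
    have := strip_volume 2 (2 * Real.exp n) (by norm_num) h1
    calc (n : ℝ≥0∞) = ENNReal.ofReal (Real.log (2 * Real.exp n) - Real.log 2) := by
          rw [Real.log_mul (by norm_num) (Real.exp_ne_zero _), Real.log_exp]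
          simp
      _ = volume {x : EuclideanSpace ℝ (Fin 2) | 2 ≤ x 0 ∧ x 0 < 2 * Real.exp n
            ∧ 0 < x 1 ∧ x 1 < (x 0)⁻¹} := this.symm
      _ ≤ _ := measure_mono (by rintro x ⟨h1, _, h3, h4⟩; exact ⟨by linarith, h3, h4⟩)
  · -- upper dim
    rw [upperShellDim, show {r : ℝ | upperShellContent 2
        {x : EuclideanSpace ℝ (Fin 2) | 1 < x 0 ∧ 0 < x 1 ∧ x 1 < (x 0)⁻¹} φ r = 0}
      = Ioi (-2) from Set.ext fun r => (content_zero_iff φ r hφ).1]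
    exact sInf_image_Ioi_EReal (-2)
  · -- lower dim
    rw [lowerShellDim, show {r : ℝ | lowerShellContent 2
        {x : EuclideanSpace ℝ (Fin 2) | 1 < x 0 ∧ 0 < x 1 ∧ x 1 < (x 0)⁻¹} φ r = 0}
      = Ioi (-2) from Set.ext fun r => (content_zero_iff φ r hφ).2]
    exact sInf_image_Ioi_EReal (-2)
  · -- the limit
    have heq : (fun t : ℝ =>
        volume (shell 2 t (φ * t) ∩
            {x : EuclideanSpace ℝ (Fin 2) | 1 < x 0 ∧ 0 < x 1 ∧ x 1 < (x 0)⁻¹}) /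
          ENNReal.ofReal (t ^ ((2 : ℝ) + (-2 : ℝ)))) = (fun t : ℝ =>
        volume (shell 2 t (φ * t) ∩
            {x : EuclideanSpace ℝ (Fin 2) | 1 < x 0 ∧ 0 < x 1 ∧ x 1 < (x 0)⁻¹})) := by
      funext t
      norm_num
    rw [heq]
    exact main_tendsto φ hφ
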